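/- arXiv:1207.1057 — 4 statements merged into one kernel-verified Lean document; each statement's English description precedes it below -/
import Mathlib

section
/- Let $n: [0, \infty) \to (0, 1]$ be given by $n(d) = 1 - \int_0^d f(x)\, dx$ for a probability density $f \ge 0$ on $(0, \infty)$, and assume $n(d) > 0$. Then $\frac{1}{B}\int_0^d \left(x + \int_0^x (y - x) f(y)\, dy\right) \frac{f(x)}{1 - \int_0^x f(y)\, dy}\, dx = \frac{1}{B}\int_0^d n(x) \ln\left[\frac{n(x)}{n(d)}\right]\, dx$. -/
open MeasureTheory

theorem coarsening_law_entropy_form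
    (B : ℝ) (hB : 0 < B)
    (f : ℝ → ℝ) (hf_cont : Continuous f)
    (hf_nonneg : ∀ x : ℝ, 0 ≤ f x)
    (hf_supp : ∀ x : ℝ, x ≤ 0 → f x = 0)
    (hf_prob : ∫ x in Set.Ioi (0:ℝ), f x = 1)
    (n : ℝ → ℝ) (hn : ∀ d : ℝ, n d = 1 - ∫ x in (0:ℝ)..d, f x)
    (d : ℝ) (hd : 0 ≤ d) (hnd : 0 < n d) :
    (1/B) * ∫ x in (0:ℝ)..d,
        (x + ∫ y in (0:ℝ)..x, (y - x) * f y) * f x / (1 - ∫ y in (0:ℝ)..x, f y)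
      = (1/B) * ∫ x in (0:ℝ)..d, n x * Real.log (n x / n d) := by
  congr 1
  set F : ℝ → ℝ := fun x => ∫ y in (0:ℝ)..x, f y with hF_def
  have hfint : ∀ a b : ℝ, IntervalIntegrable f volume a b :=
    fun a b => hf_cont.intervalIntegrable a b
  have hFderiv : ∀ x : ℝ, HasDerivAt F (f x) x := fun x =>
    intervalIntegral.integral_hasDerivAt_right (hfint 0 x)
      (hf_cont.stronglyMeasurableAtFilter _ _) hf_cont.continuousAt
  have hFcont : Continuous F := by
    have : Differentiable ℝ F := fun x => (hFderiv x).differentiableAt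
    exact this.continuous
  have hn_eq : ∀ x : ℝ, n x = 1 - F x := hn
  have hncont : Continuous n := by
    have : n = fun x => 1 - F x := funext hn_eq
    rw [this]; exact continuous_const.sub hFcont
  have hnderiv : ∀ x : ℝ, HasDerivAt n (-(f x)) x := by
    intro x
    have h := (hFderiv x).const_sub 1
    have : n = fun x => 1 - F x := funext hn_eq
    rw [this]; simpa using h
  have hnint : ∀ a b : ℝ, IntervalIntegrable n volume a b :=
    fun a b => hncont.intervalIntegrable a b
  -- monotonicity: n is antitone, so n x ≥ n d > 0 on [0, d]
  have hnpos : ∀ x ∈ Set.Icc (0:ℝ) d, 0 < n x := by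
    intro x hx
    have key : F x + (∫ y in x..d, f y) = F d :=
      intervalIntegral.integral_add_adjacent_intervals (hfint 0 x) (hfint x d)
    have h2 : 0 ≤ ∫ y in x..d, f y :=
      intervalIntegral.integral_nonneg hx.2 (fun y _ => hf_nonneg y)
    have : F x ≤ F d := by linarith
    have := hn_eq x; have := hn_eq d
    linarith
  set N : ℝ → ℝ := fun x => ∫ y in (0:ℝ)..x, n y with hN_def
  have hNderiv : ∀ x : ℝ, HasDerivAt N (n x) x := fun x =>
    intervalIntegral.integral_hasDerivAt_right (hnint 0 x)
      (hncont.stronglyMeasurableAtFilter _ _) hncont.continuousAt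
  have hNcont : Continuous N := by
    have : Differentiable ℝ N := fun x => (hNderiv x).differentiableAt
    exact this.continuous
  -- Rewrite LHS integrand as N x * f x / n x on [0, d]
  have key1 : ∀ x : ℝ, x + (∫ y in (0:ℝ)..x, (y - x) * f y) = N x := by
    intro x
    have parts : ∫ y in (0:ℝ)..x, (y - x) * f y
        = (x - x) * F x - (0 - x) * F 0 - ∫ y in (0:ℝ)..x, 1 * F y := by
      exact intervalIntegral.integral_mul_deriv_eq_deriv_mul
        (fun y _ => (hasDerivAt_id y).sub_const x)
        (fun y _ => hFderiv y)
        (intervalIntegrable_const) (hfint 0 x)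
    have hF0 : F 0 = 0 := intervalIntegral.integral_same
    have hNx : N x = x - ∫ y in (0:ℝ)..x, F y := by
      have : N x = ∫ y in (0:ℝ)..x, (1 - F y) := by
        apply intervalIntegral.integral_congr; intro y _; exact hn_eq y
      rw [this, intervalIntegral.integral_sub intervalIntegrable_const
        (hFcont.intervalIntegrable 0 x)]
      simp
    have h1 : (∫ y in (0:ℝ)..x, 1 * F y) = ∫ y in (0:ℝ)..x, F y := by
      simp
    rw [parts, hF0, hNx, h1]; ring
  have huIcc : Set.uIcc (0:ℝ) d = Set.Icc 0 d := Set.uIcc_of_le hd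
  have lhs_eq : (∫ x in (0:ℝ)..d,
        (x + ∫ y in (0:ℝ)..x, (y - x) * f y) * f x / (1 - ∫ y in (0:ℝ)..x, f y))
      = ∫ x in (0:ℝ)..d, N x * f x / n x := by
    apply intervalIntegral.integral_congr
    intro x _
    dsimp only
    rw [key1 x, ← hn x]
  rw [lhs_eq]
  -- FTC applied to g x = -(N x * log (n x))
  have hg : ∀ x ∈ Set.uIcc (0:ℝ) d,
      HasDerivAt (fun x => -(N x * Real.log (n x)))
        (N x * f x / n x - n x * Real.log (n x)) x := by
    intro x hx
    rw [huIcc] at hx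
    have hnx : n x ≠ 0 := ne_of_gt (hnpos x hx)
    have hlog : HasDerivAt (fun x => Real.log (n x)) (-(f x) / n x) x :=
      (hnderiv x).log hnx
    have := ((hNderiv x).mul hlog).neg
    refine this.congr_deriv ?_
    ring
  have hcontOn : ContinuousOn (fun x => N x * f x / n x - n x * Real.log (n x))
      (Set.uIcc (0:ℝ) d) := by
    rw [huIcc]
    have hnne : ∀ x ∈ Set.Icc (0:ℝ) d, n x ≠ 0 := fun x hx => ne_of_gt (hnpos x hx)
    exact ((hNcont.continuousOn.mul hf_cont.continuousOn).div hncont.continuousOn hnne).sub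
      (hncont.continuousOn.mul (hncont.continuousOn.log hnne))
  have hInt : IntervalIntegrable (fun x => N x * f x / n x - n x * Real.log (n x))
      volume 0 d := hcontOn.intervalIntegrable
  have ftc := intervalIntegral.integral_eq_sub_of_hasDerivAt hg hInt
  have hN0 : N 0 = 0 := intervalIntegral.integral_same
  rw [hN0] at ftc
  simp only [mul_zero, zero_mul, neg_zero, sub_zero] at ftc
  -- integrability of n * log n on [0, d]
  have hInt2 : IntervalIntegrable (fun x => n x * Real.log (n x)) volume 0 d := by
    apply ContinuousOn.intervalIntegrable
    rw [huIcc]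
    exact hncont.continuousOn.mul
      (hncont.continuousOn.log (fun x hx => ne_of_gt (hnpos x hx)))
  have hInt1 : IntervalIntegrable (fun x => N x * f x / n x) volume 0 d := by
    apply ContinuousOn.intervalIntegrable
    rw [huIcc]
    exact (hNcont.continuousOn.mul hf_cont.continuousOn).div hncont.continuousOn
      (fun x hx => ne_of_gt (hnpos x hx))
  have split : (∫ x in (0:ℝ)..d, N x * f x / n x)
      = (∫ x in (0:ℝ)..d, (N x * f x / n x - n x * Real.log (n x)))
        + ∫ x in (0:ℝ)..d, n x * Real.log (n x) := by
    rw [← intervalIntegral.integral_add (hInt1.sub hInt2) hInt2]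
    congr 1; funext x; ring
  -- RHS
  have rhs_eq : (∫ x in (0:ℝ)..d, n x * Real.log (n x / n d))
      = (∫ x in (0:ℝ)..d, n x * Real.log (n x)) - N d * Real.log (n d) := by
    have step1 : (∫ x in (0:ℝ)..d, n x * Real.log (n x / n d))
        = ∫ x in (0:ℝ)..d, (n x * Real.log (n x) - n x * Real.log (n d)) := by
      apply intervalIntegral.integral_congr
      intro x hx
      rw [huIcc] at hx
      dsimp only
      rw [Real.log_div (ne_of_gt (hnpos x hx)) (ne_of_gt hnd)]
      ring
    have hInt3 : IntervalIntegrable (fun x => n x * Real.log (n d)) volume 0 d :=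
      (hnint 0 d).mul_const _
    rw [step1, intervalIntegral.integral_sub hInt2 hInt3,
      intervalIntegral.integral_mul_const]
  rw [split, ftc, rhs_eq]
  ring
end

section
/- Let $n(x) = (A/x)^{\alpha}$ for $x \ge A > 0$ and $n(x) = 1$ for $0 \le x \le A$, with $\alpha > 0$, $\alpha \ne 1$, $B > 0$. Then $T(d) = \frac{1}{B}\int_0^d n(x)\ln\left[\frac{n(x)}{n(d)}\right] dx = \frac{\alpha A}{B(\alpha - 1)}\left(\frac{1}{\alpha - 1}\left[\left(\frac{d}{A}\right)^{1-\alpha} - 1\right] + \alpha \ln\left(\frac{d}{A}\right)\right)$ for all $d \ge A$. -/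
open Real intervalIntegral

theorem power_law_coarsening_time
    (A B α : ℝ) (hA : 0 < A) (hB : 0 < B) (hα : 0 < α) (hα1 : α ≠ 1)
    (n : ℝ → ℝ)
    (hn : ∀ x : ℝ, n x = if x ≤ A then 1 else (A / x) ^ α) :
    ∀ d : ℝ, A ≤ d →
      (1/B) * ∫ x in (0:ℝ)..d, n x * Real.log (n x / n d)
        = (α * A) / (B * (α - 1)) *
          ((1 / (α - 1)) * ((d / A) ^ (1 - α) - 1) + α * Real.log (d / A)) := by
  intro d hd
  have hd0 : 0 < d := lt_of_lt_of_le hA hd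
  have hα1' : α - 1 ≠ 0 := sub_ne_zero.mpr hα1
  have h1α : (1:ℝ) - α ≠ 0 := sub_ne_zero.mpr (Ne.symm hα1)
  have hnd : n d = (A / d) ^ α := by
    rw [hn]
    split_ifs with h
    · have hdA : d = A := le_antisymm h hd
      simp [hdA, div_self hA.ne']
    · rfl
  have hndpos : (0:ℝ) < (A / d) ^ α := Real.rpow_pos_of_pos (div_pos hA hd0) _
  -- constant value on [0, A]
  set C : ℝ := α * (Real.log d - Real.log A) with hC
  have hconst : ∀ x ∈ Set.uIcc (0:ℝ) A, n x * Real.log (n x / n d) = C := by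
    intro x hx
    rw [Set.uIcc_of_le hA.le] at hx
    rw [hn, if_pos hx.2, hnd, one_mul, one_div, Real.log_inv,
      Real.log_rpow (div_pos hA hd0), Real.log_div hA.ne' hd0.ne', hC]
    ring
  -- the nice formula on [A, d]
  set g : ℝ → ℝ := fun x => α * A ^ α * x ^ (-α) * (Real.log d - Real.log x) with hg
  have heq : ∀ x ∈ Set.uIcc A d, n x * Real.log (n x / n d) = g x := by
    intro x hx
    rw [Set.uIcc_of_le hd] at hx
    have hx0 : 0 < x := lt_of_lt_of_le hA hx.1
    have hnx : n x = (A / x) ^ α := by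
      rw [hn]
      split_ifs with h
      · have : x = A := le_antisymm h hx.1
        simp [this, div_self hA.ne']
      · rfl
    have hdiv : (A / x) ^ α = A ^ α * x ^ (-α) := by
      rw [Real.div_rpow hA.le hx0.le, Real.rpow_neg hx0.le, div_eq_mul_inv]
    rw [hnx, hnd, Real.log_div (Real.rpow_pos_of_pos (div_pos hA hx0) _).ne'
      hndpos.ne', Real.log_rpow (div_pos hA hx0), Real.log_rpow (div_pos hA hd0),
      Real.log_div hA.ne' hx0.ne', Real.log_div hA.ne' hd0.ne', hdiv, hg]
    ring
  -- antiderivative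
  set c : ℝ := α * A ^ α / (1 - α) with hc
  set F : ℝ → ℝ := fun x =>
    c * (x ^ (1 - α) * (Real.log d - Real.log x) + x ^ (1 - α) / (1 - α)) with hF
  have hderiv : ∀ x ∈ Set.uIcc A d, HasDerivAt F (g x) x := by
    intro x hx
    rw [Set.uIcc_of_le hd] at hx
    have hx0 : 0 < x := lt_of_lt_of_le hA hx.1
    have h1 : HasDerivAt (fun y : ℝ => y ^ (1 - α)) ((1 - α) * x ^ (1 - α - 1)) x :=
      Real.hasDerivAt_rpow_const (Or.inl hx0.ne')
    have h2 : HasDerivAt (fun y : ℝ => Real.log d - Real.log y) (-x⁻¹) x := by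
      exact ((hasDerivAt_const x (Real.log d)).sub (Real.hasDerivAt_log hx0.ne')).congr_deriv (by ring)
    have h3 := (h1.mul h2).add (h1.div_const (1 - α))
    have h4 := h3.const_mul c
    convert h4 using 1
    · rfl
    · rfl
    · rfl
    have hexp : x ^ (1 - α - 1) = x ^ (1 - α) * x⁻¹ := by
      rw [← Real.rpow_neg_one x, ← Real.rpow_add hx0]
      ring_nf
    have hexp2 : x ^ (-α) = x ^ (1 - α) * x⁻¹ := by
      rw [← Real.rpow_neg_one x, ← Real.rpow_add hx0]
      ring_nf
    show α * A ^ α * x ^ (-α) * (Real.log d - Real.log x)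
      = c * ((1 - α) * x ^ (1 - α - 1) * (Real.log d - Real.log x)
        + x ^ (1 - α) * -x⁻¹ + (1 - α) * x ^ (1 - α - 1) / (1 - α))
    rw [hc, hexp, hexp2]
    field_simp
    ring
  -- integrability of g on [A, d]
  have hgcont : ContinuousOn g (Set.uIcc A d) := by
    rw [Set.uIcc_of_le hd]
    apply ContinuousOn.mul
    · apply continuousOn_const.mul
      intro x hx
      exact (Real.continuousAt_rpow_const x (-α)
        (Or.inl (lt_of_lt_of_le hA hx.1).ne')).continuousWithinAt
    · apply continuousOn_const.sub
      intro x hx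
      exact (Real.continuousAt_log (lt_of_lt_of_le hA hx.1).ne').continuousWithinAt
  have hgint : IntervalIntegrable g MeasureTheory.volume A d :=
    hgcont.intervalIntegrable
  -- integrability of the original integrand on both pieces
  have hint1 : IntervalIntegrable (fun x => n x * Real.log (n x / n d))
      MeasureTheory.volume 0 A := by
    apply ContinuousOn.intervalIntegrable
    exact (continuousOn_const.congr hconst)
  have hint2 : IntervalIntegrable (fun x => n x * Real.log (n x / n d))
      MeasureTheory.volume A d := by
    apply ContinuousOn.intervalIntegrable
    exact hgcont.congr heq
  -- split and compute
  have hsplit : (∫ x in (0:ℝ)..d, n x * Real.log (n x / n d))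
      = (∫ x in (0:ℝ)..A, n x * Real.log (n x / n d))
        + ∫ x in A..d, n x * Real.log (n x / n d) :=
    (intervalIntegral.integral_add_adjacent_intervals hint1 hint2).symm
  have hI1 : (∫ x in (0:ℝ)..A, n x * Real.log (n x / n d)) = A * C := by
    rw [intervalIntegral.integral_congr hconst, intervalIntegral.integral_const,
      smul_eq_mul, sub_zero]
  have hI2 : (∫ x in A..d, n x * Real.log (n x / n d)) = F d - F A := by
    rw [intervalIntegral.integral_congr heq]
    exact intervalIntegral.integral_eq_sub_of_hasDerivAt hderiv hgint
  rw [hsplit, hI1, hI2]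
  -- final algebra
  have hAA : A ^ α * A ^ (1 - α) = A := by
    rw [← Real.rpow_add hA]
    simp
  have hkey : A ^ α * d ^ (1 - α) = A * (d / A) ^ (1 - α) := by
    rw [Real.div_rpow hd0.le hA.le]
    have hApos : (0:ℝ) < A ^ (1 - α) := Real.rpow_pos_of_pos hA _
    field_simp
    exact hAA
  have hlog : Real.log (d / A) = Real.log d - Real.log A :=
    Real.log_div hd0.ne' hA.ne'
  set P := (d / A) ^ (1 - α) with hP
  set L := Real.log d - Real.log A with hL
  have hFd : F d = α * (A * P) / ((1 - α) * (1 - α)) := by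
    have h1 : F d = α / (1 - α) * (A ^ α * d ^ (1 - α)) / (1 - α) := by
      rw [hF]
      show c * (d ^ (1 - α) * (Real.log d - Real.log d) + d ^ (1 - α) / (1 - α))
        = α / (1 - α) * (A ^ α * d ^ (1 - α)) / (1 - α)
      rw [hc]
      ring
    rw [h1, hkey]
    field_simp
  have hFA : F A = α * A * L / (1 - α) + α * A / ((1 - α) * (1 - α)) := by
    have h1 : F A = α / (1 - α) * (A ^ α * A ^ (1 - α)) * L
        + α / (1 - α) * (A ^ α * A ^ (1 - α)) / (1 - α) := by
      rw [hF]
      show c * (A ^ (1 - α) * (Real.log d - Real.log A) + A ^ (1 - α) / (1 - α))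
        = α / (1 - α) * (A ^ α * A ^ (1 - α)) * (Real.log d - Real.log A)
          + α / (1 - α) * (A ^ α * A ^ (1 - α)) / (1 - α)
      rw [hc]
      ring
    rw [h1, hAA, hL]
    field_simp
  rw [hFd, hFA, hC, hlog]
  field_simp
  ring
end

section
/- Let $n(x) = A/x$ for $x \ge A > 0$ and $n(x) = 1$ for $0 \le x \le A$, and $B > 0$. Then $T(d) = \frac{1}{B}\int_0^d n(x)\ln\left[\frac{n(x)}{n(d)}\right] dx = \frac{A}{B}\left(\frac{1}{2}\left[\ln\left(\frac{d}{A}\right)\right]^2 + \ln\left(\frac{d}{A}\right)\right)$ for $d \ge A$, and consequently the coarsening rate is $n(t) = \exp\left[1 - \sqrt{1 + 2Bt/A}\right]$ where $n(t)$ denotes $n(d)$ evaluated at the $d$ with $T(d) = t$. -/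
theorem threshold_coarsening_law
    (A B : ℝ) (hA : 0 < A) (hB : 0 < B)
    (n : ℝ → ℝ)
    (hn : ∀ x : ℝ, n x = if x ≤ A then 1 else A / x)
    (T : ℝ → ℝ)
    (hT : ∀ d : ℝ, T d = (1/B) * ∫ x in (0:ℝ)..d, n x * Real.log (n x / n d)) :
    (∀ d : ℝ, A ≤ d →
      T d = (A / B) * ((Real.log (d / A))^2 / 2 + Real.log (d / A))) ∧
    (∀ d : ℝ, A ≤ d →
      n d = Real.exp (1 - Real.sqrt (1 + 2 * B * T d / A))) := by
  have hnd : ∀ d : ℝ, A ≤ d → n d = A / d := by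
    intro d hd
    rw [hn]
    split_ifs with h
    · have hdA : d = A := le_antisymm h hd
      rw [hdA]; field_simp
    · rfl
  have key : ∀ d : ℝ, A ≤ d →
      T d = (A / B) * ((Real.log (d / A))^2 / 2 + Real.log (d / A)) := by
    intro d hd
    have hd0 : (0:ℝ) < d := lt_of_lt_of_le hA hd
    have hndAd : n d = A / d := hnd d hd
    set L := Real.log (d / A) with hLdef
    have hLsub : L = Real.log d - Real.log A := Real.log_div hd0.ne' hA.ne'
    -- first piece: on [0,A], integrand = L
    have hf1 : Set.EqOn (fun x => n x * Real.log (n x / n d)) (fun _ => L)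
        (Set.uIcc (0:ℝ) A) := by
      intro x hx
      rw [Set.uIcc_of_le hA.le] at hx
      have hxA : x ≤ A := hx.2
      simp only [hn x, if_pos hxA, hndAd, one_mul]
      rw [one_div, inv_div]
    -- second piece: on [A,d], integrand = (A/x)*(log d - log x)
    have hf2 : Set.EqOn (fun x => n x * Real.log (n x / n d))
        (fun x => (A / x) * (Real.log d - Real.log x)) (Set.uIcc A d) := by
      intro x hx
      rw [Set.uIcc_of_le hd] at hx
      have hx0 : (0:ℝ) < x := lt_of_lt_of_le hA hx.1
      have hnx : n x = A / x := by
        rw [hn x]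
        split_ifs with h
        · have : x = A := le_antisymm h hx.1
          rw [this]; field_simp
        · rfl
      simp only [hnx, hndAd]
      congr 1
      have hx' : A / x / (A / d) = d / x := by
        field_simp
      rw [hx', Real.log_div hd0.ne' hx0.ne']
    have hc1 : ContinuousOn (fun x => n x * Real.log (n x / n d)) (Set.uIcc (0:ℝ) A) :=
      (continuousOn_const : ContinuousOn (fun _ => L) _).congr hf1
    have hc2 : ContinuousOn (fun x => n x * Real.log (n x / n d)) (Set.uIcc A d) := by
      apply ContinuousOn.congr _ hf2
      apply ContinuousOn.mul
      · apply ContinuousOn.div continuousOn_const continuousOn_id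
        intro x hx
        rw [Set.uIcc_of_le hd] at hx
        exact (lt_of_lt_of_le hA hx.1).ne'
      · apply ContinuousOn.sub continuousOn_const
        apply ContinuousOn.log continuousOn_id
        intro x hx
        rw [Set.uIcc_of_le hd] at hx
        exact (lt_of_lt_of_le hA hx.1).ne'
    have hi1 : IntervalIntegrable (fun x => n x * Real.log (n x / n d)) MeasureTheory.volume 0 A :=
      hc1.intervalIntegrable
    have hi2 : IntervalIntegrable (fun x => n x * Real.log (n x / n d)) MeasureTheory.volume A d :=
      hc2.intervalIntegrable
    have hsplit : ∫ x in (0:ℝ)..d, n x * Real.log (n x / n d)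
        = (∫ x in (0:ℝ)..A, n x * Real.log (n x / n d))
          + ∫ x in A..d, n x * Real.log (n x / n d) :=
      (intervalIntegral.integral_add_adjacent_intervals hi1 hi2).symm
    have hI1 : (∫ x in (0:ℝ)..A, n x * Real.log (n x / n d)) = A * L := by
      rw [intervalIntegral.integral_congr hf1, intervalIntegral.integral_const]
      simp
    have hI2 : (∫ x in A..d, n x * Real.log (n x / n d)) = A * L ^ 2 / 2 := by
      rw [intervalIntegral.integral_congr hf2]
      have hderiv : ∀ x ∈ Set.uIcc A d,
          HasDerivAt (fun x => A * (Real.log d * Real.log x - (Real.log x)^2 / 2))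
            ((A / x) * (Real.log d - Real.log x)) x := by
        intro x hx
        rw [Set.uIcc_of_le hd] at hx
        have hx0 : (0:ℝ) < x := lt_of_lt_of_le hA hx.1
        have hlog : HasDerivAt Real.log (1 / x) x := by
          simpa using Real.hasDerivAt_log hx0.ne'
        have h1 : HasDerivAt (fun x => Real.log d * Real.log x - (Real.log x)^2 / 2)
            (Real.log d * (1 / x) - (2 * Real.log x ^ 1 * (1 / x)) / 2) x := by
          exact (hlog.const_mul (Real.log d)).sub ((hlog.pow 2).div_const 2)
        have := h1.const_mul A
        convert this using 1
        · rfl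
        · rfl
        · ring
      have hcont : ContinuousOn (fun x => (A / x) * (Real.log d - Real.log x)) (Set.uIcc A d) :=
        hc2.congr (fun x hx => (hf2 hx).symm)
      rw [intervalIntegral.integral_eq_sub_of_hasDerivAt hderiv hcont.intervalIntegrable]
      rw [hLsub]
      ring
    rw [hT d, hsplit, hI1, hI2]
    field_simp
    ring
  refine ⟨key, fun d hd => ?_⟩
  have hd0 : (0:ℝ) < d := lt_of_lt_of_le hA hd
  set L := Real.log (d / A) with hLdef
  have hL0 : 0 ≤ L := Real.log_nonneg ((one_le_div hA).mpr hd)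
  have hTd : 2 * B * T d / A = L ^ 2 + 2 * L := by
    rw [key d hd]
    field_simp
    ring
  have hsq : 1 + 2 * B * T d / A = (1 + L) ^ 2 := by rw [hTd]; ring
  rw [hsq, Real.sqrt_sq (by linarith)]
  have : (1 : ℝ) - (1 + L) = -L := by ring
  rw [this, hnd d hd]
  rw [← Real.log_inv, Real.exp_log (by positivity)]
  rw [← one_div, one_div_div]
end

section
/- Let $n(x) = (1+x^2)e^{-x}$ and $B > 0$, and $T(d) = \frac{1}{B}\int_0^d n(x)\ln\left[\frac{n(x)}{n(d)}\right] dx$. Then $T(d) = \frac{3d}{B} + o(d)$ as $d \to \infty$. -/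
open Filter Asymptotics

private lemma antider_n (x : ℝ) :
    HasDerivAt (fun x : ℝ => -((x^2 + 2*x + 3) * Real.exp (-x)))
      ((1 + x^2) * Real.exp (-x)) x := by
  have h1 : HasDerivAt (fun y : ℝ => y^2 + 2*y + 3) (2*x + 2) x := by
    have := ((hasDerivAt_pow 2 x).add ((hasDerivAt_id x).const_mul 2)).add_const 3
    simp only [id_eq] at this
    exact this.congr_deriv (by push_cast; ring)
  have h2 : HasDerivAt (fun x : ℝ => Real.exp (-x)) (-Real.exp (-x)) x := by
    simpa using ((hasDerivAt_id x).neg).exp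
  have := (h1.mul h2).neg
  exact this.congr_deriv (by ring)

private lemma integral_n (d : ℝ) :
    (∫ x in (0:ℝ)..d, (1 + x^2) * Real.exp (-x))
      = 3 - (d^2 + 2*d + 3) * Real.exp (-d) := by
  have h := intervalIntegral.integral_eq_sub_of_hasDerivAt (a := (0:ℝ)) (b := d)
    (f := fun x : ℝ => -((x^2 + 2*x + 3) * Real.exp (-x)))
    (f' := fun x : ℝ => (1 + x^2) * Real.exp (-x))
    (fun x _ => antider_n x)
    (by apply Continuous.intervalIntegrable; continuity)
  rw [h]
  norm_num [Real.exp_zero]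
  ring

private lemma antider_g (x : ℝ) :
    HasDerivAt (fun x : ℝ => -((x^4 + 5*x^3 + 16*x^2 + 33*x + 33) * Real.exp (-x)))
      ((x + x^2 + x^3 + x^4) * Real.exp (-x)) x := by
  have h1 : HasDerivAt (fun y : ℝ => y^4 + 5*y^3 + 16*y^2 + 33*y + 33)
      (4*x^3 + 15*x^2 + 32*x + 33) x := by
    have := ((((hasDerivAt_pow 4 x).add ((hasDerivAt_pow 3 x).const_mul 5)).add
      ((hasDerivAt_pow 2 x).const_mul 16)).add ((hasDerivAt_id x).const_mul 33)).add_const 33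
    simp only [id_eq] at this
    exact this.congr_deriv (by push_cast; ring)
  have h2 : HasDerivAt (fun x : ℝ => Real.exp (-x)) (-Real.exp (-x)) x := by
    simpa using ((hasDerivAt_id x).neg).exp
  have := (h1.mul h2).neg
  exact this.congr_deriv (by ring)

private lemma integral_g (d : ℝ) :
    (∫ x in (0:ℝ)..d, (x + x^2 + x^3 + x^4) * Real.exp (-x))
      = 33 - (d^4 + 5*d^3 + 16*d^2 + 33*d + 33) * Real.exp (-d) := by
  have h := intervalIntegral.integral_eq_sub_of_hasDerivAt (a := (0:ℝ)) (b := d)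
    (f := fun x : ℝ => -((x^4 + 5*x^3 + 16*x^2 + 33*x + 33) * Real.exp (-x)))
    (f' := fun x : ℝ => (x + x^2 + x^3 + x^4) * Real.exp (-x))
    (fun x _ => antider_g x)
    (by apply Continuous.intervalIntegrable; continuity)
  rw [h]
  norm_num [Real.exp_zero]
  ring

theorem nonmonotone_coarsening_asymptotics
    (B : ℝ) (hB : 0 < B)
    (n : ℝ → ℝ) (hn : ∀ x : ℝ, n x = (1 + x^2) * Real.exp (-x))
    (T : ℝ → ℝ)
    (hT : ∀ d : ℝ, T d = (1/B) * ∫ x in (0:ℝ)..d, n x * Real.log (n x / n d)) :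
    (fun d : ℝ => T d - 3 * d / B) =o[atTop] (fun d : ℝ => d) := by
  have hnpos : ∀ x : ℝ, 0 < n x := by
    intro x; rw [hn]
    exact mul_pos (by positivity) (Real.exp_pos _)
  have hncont : Continuous n := by
    have : n = fun x => (1 + x^2) * Real.exp (-x) := funext hn
    rw [this]; continuity
  have hnlogcont : Continuous (fun x => n x * Real.log (n x)) :=
    hncont.mul (hncont.log (fun x => (hnpos x).ne'))
  -- A d := ∫₀^d n log n
  set A : ℝ → ℝ := fun d => ∫ x in (0:ℝ)..d, n x * Real.log (n x) with hA
  -- T formula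
  have hTform : ∀ d : ℝ, T d = (1/B) * (A d - Real.log (n d) * (3 - (d^2+2*d+3)*Real.exp (-d))) := by
    intro d
    rw [hT d]
    congr 1
    have hsplit : (fun x => n x * Real.log (n x / n d))
        = fun x => n x * Real.log (n x) - Real.log (n d) * n x := by
      funext x
      rw [Real.log_div (hnpos x).ne' (hnpos d).ne']
      ring
    rw [hsplit, intervalIntegral.integral_sub (hnlogcont.intervalIntegrable _ _)
      ((continuous_const.mul hncont).intervalIntegrable _ _) (g := fun x => Real.log (n d) * n x),
      intervalIntegral.integral_const_mul]
    have hN : (∫ x in (0:ℝ)..d, n x) = 3 - (d^2+2*d+3)*Real.exp (-d) := by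
      have : (fun x => n x) = fun x => (1 + x^2) * Real.exp (-x) := funext hn
      rw [this, integral_n]
    rw [hN]
  -- bound on A
  have hAbound : ∀ d : ℝ, 0 ≤ d → |A d| ≤ 33 := by
    intro d hd
    have h1 : |A d| ≤ ∫ x in (0:ℝ)..d, |n x * Real.log (n x)| := by
      simpa [hA] using intervalIntegral.abs_integral_le_integral_abs hd
        (f := fun x => n x * Real.log (n x))
    have h2 : (∫ x in (0:ℝ)..d, |n x * Real.log (n x)|)
        ≤ ∫ x in (0:ℝ)..d, (x + x^2 + x^3 + x^4) * Real.exp (-x) := by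
      apply intervalIntegral.integral_mono_on hd
      · exact (hnlogcont.abs).intervalIntegrable _ _
      · exact (by continuity : Continuous fun x : ℝ =>
          (x + x^2 + x^3 + x^4) * Real.exp (-x)).intervalIntegrable _ _
      · intro x hx
        have hx0 : 0 ≤ x := hx.1
        have hlog : |Real.log (n x)| ≤ x^2 + x := by
          rw [hn, Real.log_mul (by positivity) (Real.exp_pos _).ne', Real.log_exp]
          have h3 : Real.log (1 + x^2) ≤ x^2 := by
            have := Real.log_le_sub_one_of_pos (x := 1 + x^2) (by positivity)
            linarith
          have h4 : 0 ≤ Real.log (1 + x^2) :=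
            Real.log_nonneg (by nlinarith)
          rw [abs_le]
          constructor <;> [linarith; linarith]
        calc |n x * Real.log (n x)| = n x * |Real.log (n x)| := by
              rw [abs_mul, abs_of_pos (hnpos x)]
          _ ≤ n x * (x^2 + x) :=
              mul_le_mul_of_nonneg_left hlog (hnpos x).le
          _ = (x + x^2 + x^3 + x^4) * Real.exp (-x) := by rw [hn]; ring
    have h3 : (∫ x in (0:ℝ)..d, (x + x^2 + x^3 + x^4) * Real.exp (-x)) ≤ 33 := by
      rw [integral_g]
      have : 0 ≤ (d^4 + 5*d^3 + 16*d^2 + 33*d + 33) * Real.exp (-d) := by positivity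
      linarith
    linarith
  -- the function r tends to 0
  have hr0 : Tendsto (fun d : ℝ => (d^2+2*d+3) * Real.exp (-d)) atTop (nhds 0) := by
    have h2 := Real.tendsto_pow_mul_exp_neg_atTop_nhds_zero 2
    have h1 := Real.tendsto_pow_mul_exp_neg_atTop_nhds_zero 1
    have h0 := Real.tendsto_exp_neg_atTop_nhds_zero
    have h := (h2.add (h1.const_mul 2)).add (h0.const_mul 3)
    rw [show (0:ℝ) + 2*0 + 3*0 = 0 by ring] at h
    exact h.congr fun d => by ring
  -- L d / d → 0
  have hL0 : Tendsto (fun d : ℝ => Real.log (1 + d^2) / d) atTop (nhds 0) := by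
    have hlog := Real.isLittleO_log_id_atTop.tendsto_div_nhds_zero
    have hub : Tendsto (fun d : ℝ => (Real.log 2 + 2 * Real.log d) / d) atTop (nhds 0) := by
      have h1 : Tendsto (fun d : ℝ => Real.log 2 / d) atTop (nhds 0) :=
        tendsto_const_nhds.div_atTop tendsto_id
      have h2 : Tendsto (fun d : ℝ => 2 * (Real.log d / d)) atTop (nhds 0) := by
        simpa using hlog.const_mul 2
      have h := h1.add h2
      simp only [add_zero] at h
      exact h.congr fun d => by ring
    apply squeeze_zero_norm' _ hub
    filter_upwards [eventually_ge_atTop (1:ℝ)] with d hd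
    have hd0 : 0 < d := lt_of_lt_of_le one_pos hd
    have hLpos : 0 ≤ Real.log (1 + d^2) := Real.log_nonneg (by nlinarith)
    have hub2 : Real.log (1 + d^2) ≤ Real.log 2 + 2 * Real.log d := by
      have hle : (1:ℝ) + d^2 ≤ 2 * d^2 := by nlinarith
      calc Real.log (1 + d^2) ≤ Real.log (2 * d^2) :=
            Real.log_le_log (by positivity) hle
        _ = Real.log 2 + 2 * Real.log d := by
            rw [Real.log_mul two_ne_zero (by positivity), Real.log_pow]
            push_cast; ring
    rw [Real.norm_eq_abs, abs_of_nonneg (by positivity)]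
    gcongr
  -- main limit
  have hmain : Tendsto (fun d : ℝ => (T d - 3 * d / B) / d) atTop (nhds 0) := by
    have heq : (fun d : ℝ => (1/B) * (A d / d - 3 * (Real.log (1 + d^2) / d)
            + (Real.log (1 + d^2) / d) * ((d^2+2*d+3)*Real.exp (-d))
            - (d^2+2*d+3)*Real.exp (-d)))
        =ᶠ[atTop] (fun d : ℝ => (T d - 3 * d / B) / d) := by
      filter_upwards [eventually_ge_atTop (1:ℝ)] with d hd
      have hd0 : d ≠ 0 := by intro h; rw [h] at hd; linarith
      have hlognd : Real.log (n d) = Real.log (1 + d^2) - d := by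
        rw [hn, Real.log_mul (by positivity) (Real.exp_pos _).ne', Real.log_exp]
        ring
      rw [hTform d, hlognd]
      field_simp
      ring
    refine Tendsto.congr' heq ?_
    have hAd : Tendsto (fun d : ℝ => A d / d) atTop (nhds 0) := by
      apply squeeze_zero_norm' _
        (tendsto_const_nhds.div_atTop tendsto_id : Tendsto (fun d : ℝ => (33:ℝ)/d) atTop (nhds 0))
      filter_upwards [eventually_ge_atTop (1:ℝ)] with d hd
      have hd0 : 0 < d := lt_of_lt_of_le one_pos hd
      rw [Real.norm_eq_abs, abs_div, abs_of_pos hd0]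
      gcongr
      exact hAbound d (by linarith)
    have h := ((hAd.sub (hL0.const_mul 3)).add (hL0.mul hr0)).sub hr0
    norm_num at h
    simpa using h.const_mul (1/B)
  rw [isLittleO_iff_tendsto']
  · exact hmain
  · filter_upwards [eventually_ge_atTop (1:ℝ)] with d hd h
    exact absurd h (by linarith)
end
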